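/- Let α : I → ℝ³ be a C² regular non-lightlike curve in Minkowski space with Bishop frame {t, n₁, n₂} (frame equations t' = ε₁κ₁n₁ + κ₂n₂, nᵢ' = −εκᵢ t, ε = (t,t), ε₁ = (n₁,n₁)). If there exist constants a₁, a₂ with 1 + ε a₁ κ₁(s) + ε a₂ κ₂(s) = 0 for all s, then the point P(s) = α(s) − a₁ n₁(s) − a₂ n₂(s) is constant, and α lies on the sphere {x : (x−P, x−P) = ε₁ a₁² + a₂²}. -/

import Mathlib

noncomputable section

/-- The Minkowski bilinear form on ℝ³. -/
def mink (x y : Fin 3 → ℝ) : ℝ := x 0 * y 0 + x 1 * y 1 - x 2 * y 2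

/-- If the normal development of a non-lightlike curve with a Bishop frame lies on the line
`1 + εa₁X + εa₂Y = 0` not through the origin, then `P = α − a₁n₁ − a₂n₂` is a fixed point
and the curve lies on the sphere `{x : (x−P,x−P) = ε₁a₁² + a₂²}`. -/
theorem normal_development_line_implies_spherical
    (α t n₁ n₂ : ℝ → Fin 3 → ℝ) (κ₁ κ₂ : ℝ → ℝ) (ε ε₁ : ℝ)
    (hε : ε = 1 ∨ ε = -1) (hε₁ : ε₁ = 1 ∨ ε₁ = -1)
    (hαt : ∀ s, HasDerivAt α (t s) s)
    (htt : ∀ s, mink (t s) (t s) = ε)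
    (hn₁n₁ : ∀ s, mink (n₁ s) (n₁ s) = ε₁)
    (hn₂n₂ : ∀ s, mink (n₂ s) (n₂ s) = 1)
    (htn₁ : ∀ s, mink (t s) (n₁ s) = 0)
    (htn₂ : ∀ s, mink (t s) (n₂ s) = 0)
    (hn₁n₂ : ∀ s, mink (n₁ s) (n₂ s) = 0)
    (ht' : ∀ s, HasDerivAt t ((ε₁ * κ₁ s) • n₁ s + κ₂ s • n₂ s) s)
    (hn₁' : ∀ s, HasDerivAt n₁ ((-(ε * κ₁ s)) • t s) s)
    (hn₂' : ∀ s, HasDerivAt n₂ ((-(ε * κ₂ s)) • t s) s)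
    (a₁ a₂ : ℝ)
    (hline : ∀ s, 1 + ε * a₁ * κ₁ s + ε * a₂ * κ₂ s = 0) :
    (∀ s, α s - a₁ • n₁ s - a₂ • n₂ s = α 0 - a₁ • n₁ 0 - a₂ • n₂ 0) ∧
    (∀ s, mink (α s - (α 0 - a₁ • n₁ 0 - a₂ • n₂ 0))
        (α s - (α 0 - a₁ • n₁ 0 - a₂ • n₂ 0)) = ε₁ * a₁ ^ 2 + a₂ ^ 2) := by
  have hP : ∀ s, α s - a₁ • n₁ s - a₂ • n₂ s = α 0 - a₁ • n₁ 0 - a₂ • n₂ 0 := by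
    have hderiv : ∀ s : ℝ, HasDerivAt (fun s => α s - a₁ • n₁ s - a₂ • n₂ s) 0 s := by
      intro s
      have h := ((hαt s).sub ((hn₁' s).const_smul a₁)).sub ((hn₂' s).const_smul a₂)
      refine h.congr_deriv (Eq.symm ?_)
      have hl := hline s
      funext i
      simp only [Pi.sub_apply, Pi.smul_apply, smul_eq_mul, Pi.zero_apply]
      linear_combination (-(t s i)) * hl
    intro s
    have := is_const_of_deriv_eq_zero (f := fun s => α s - a₁ • n₁ s - a₂ • n₂ s)
      (fun x => (hderiv x).differentiableAt) (fun x => (hderiv x).deriv) s 0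
    exact this
  refine ⟨hP, fun s => ?_⟩
  have h : α s - (α 0 - a₁ • n₁ 0 - a₂ • n₂ 0) = a₁ • n₁ s + a₂ • n₂ s := by
    rw [← hP s]; abel
  rw [h]
  have h1 := hn₁n₁ s; have h2 := hn₂n₂ s; have h3 := hn₁n₂ s
  simp only [mink, Pi.add_apply, Pi.smul_apply, smul_eq_mul] at *
  linear_combination a₁^2 * h1 + a₂^2 * h2 + 2*a₁*a₂*h3
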